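/- arXiv:2411.09485 — 4 statements merged into one kernel-verified Lean document; each statement's English description precedes it below -/
import Mathlib

section
/- For all α₁, α₂ ∈ ℕ, the function (x,y) ↦ x^{α₁} y^{α₂} / ((1-x)(1-y)) is Lebesgue integrable on the standard triangle T and ∫_T x^{α₁} y^{α₂} / ((1-x)(1-y)) d(x,y) = −∑_{i=1}^{α₂} 1/i² + π²/6 − ∑_{j=1}^{α₁} (1/j) · (α₂! (j−1)!)/(α₂+j)!. -/
open MeasureTheory Set intervalIntegral Real
open scoped ENNReal

-- L1: integrability of -log near 0
lemma tibs_integrableOn_neg_log : IntegrableOn (fun x : ℝ => -Real.log x) (Set.Ioc 0 1) := by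
  have hr : IntegrableOn (fun x : ℝ => 2 * x ^ (-(1:ℝ)/2)) (Set.Ioc 0 1) := by
    have := (intervalIntegral.intervalIntegrable_rpow' (r := -(1:ℝ)/2) (by norm_num)
      (a := 0) (b := 1))
    rw [intervalIntegrable_iff_integrableOn_Ioc_of_le (by norm_num)] at this
    exact this.const_mul 2
  refine Integrable.mono hr ?_ ?_
  · exact (Real.measurable_log.neg).aestronglyMeasurable
  · filter_upwards [ae_restrict_mem measurableSet_Ioc] with x hx
    have hx0 : 0 < x := hx.1
    have hlog : 0 ≤ -Real.log x := by
      simpa using Real.log_nonpos (le_of_lt hx0) hx.2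
    rw [Real.norm_eq_abs, Real.norm_eq_abs, abs_of_nonneg hlog, abs_of_nonneg (by positivity)]
    have h1 : Real.log (x ^ (-(1:ℝ)/2)) ≤ x ^ (-(1:ℝ)/2) - 1 :=
      Real.log_le_sub_one_of_pos (by positivity)
    have h2 : Real.log (x ^ (-(1:ℝ)/2)) = (-(1:ℝ)/2) * Real.log x := Real.log_rpow hx0 (-(1:ℝ)/2)
    nlinarith [Real.rpow_nonneg hx0.le (-(1:ℝ)/2)]

lemma tibs_intervalIntegrable_pow_neg_log (n : ℕ) :
    IntervalIntegrable (fun x : ℝ => x ^ n * (-Real.log x)) volume 0 1 := by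
  rw [intervalIntegrable_iff_integrableOn_Ioc_of_le (by norm_num)]
  refine Integrable.mono tibs_integrableOn_neg_log ?_ ?_
  · exact ((measurable_id.pow_const n).mul Real.measurable_log.neg).aestronglyMeasurable
  · filter_upwards [ae_restrict_mem measurableSet_Ioc] with x hx
    have hx0 : 0 < x := hx.1
    have hlog : 0 ≤ -Real.log x := by simpa using Real.log_nonpos (le_of_lt hx0) hx.2
    have hxn : x ^ n ≤ 1 := pow_le_one₀ hx0.le hx.2
    rw [Real.norm_eq_abs, Real.norm_eq_abs, abs_of_nonneg hlog,
      abs_of_nonneg (by positivity)]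
    nlinarith [pow_nonneg hx0.le n]

lemma tibs_integral_pow_neg_log (n : ℕ) :
    ∫ x in (0:ℝ)..1, x ^ n * (-Real.log x) = 1 / ((n:ℝ) + 1) ^ 2 := by
  set c : ℝ := ((n : ℝ) + 1) with hc
  have hcpos : (0:ℝ) < c := by positivity
  set F : ℝ → ℝ := fun x => (x ^ (n+1) - c * (x ^ n * (x * Real.log x))) / c ^ 2 with hF
  have hcont : ContinuousOn F (Icc 0 1) := by
    apply Continuous.continuousOn
    exact (((continuous_pow (n+1)).sub (continuous_const.mul ((continuous_pow n).mul
      Real.continuous_mul_log))).div_const _)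
  have hderiv : ∀ x ∈ Ioo (0:ℝ) 1, HasDerivAt F (x ^ n * (-Real.log x)) x := by
    intro x hx
    have hx0 : (0:ℝ) < x := hx.1
    have h1 : HasDerivAt (fun x : ℝ => x ^ (n+1)) ((n+1 : ℕ) * x ^ n) x := by
      simpa using hasDerivAt_pow (n+1) x
    have hlog : HasDerivAt Real.log x⁻¹ x := Real.hasDerivAt_log hx0.ne'
    have h2 : HasDerivAt (fun x : ℝ => x ^ (n+1) * Real.log x)
        ((n+1 : ℕ) * x ^ n * Real.log x + x ^ (n+1) * x⁻¹) x := h1.mul hlog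
    have h3 : HasDerivAt F ((((n:ℝ)+1) * x ^ n -
        c * ((n+1 : ℕ) * x ^ n * Real.log x + x ^ (n+1) * x⁻¹)) / c ^ 2) x := by
      have heq : ∀ y : ℝ, F y = (y ^ (n+1) - c * (y ^ (n+1) * Real.log y)) / c ^ 2 := by
        intro y; simp only [hF]; ring_nf
      rw [show F = fun y => (y ^ (n+1) - c * (y ^ (n+1) * Real.log y)) / c ^ 2 from funext heq]
      exact ((h1.sub (h2.const_mul c)).div_const _).congr_deriv (by push_cast; ring)
    convert h3 using 1
    have hxinv : x ^ (n+1) * x⁻¹ = x ^ n := by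
      rw [pow_succ]; field_simp
    rw [hxinv]
    field_simp [hc]
    rw [hc]; push_cast; ring
  have := intervalIntegral.integral_eq_sub_of_hasDerivAt_of_le (by norm_num : (0:ℝ) ≤ 1)
    hcont hderiv (tibs_intervalIntegrable_pow_neg_log n)
  rw [this]
  simp [hF, hc]

lemma tibs_beta_nat (a b : ℕ) :
    ∫ x in (0:ℝ)..1, x ^ b * (1 - x) ^ a =
      (b.factorial : ℝ) * a.factorial / (a + b + 1).factorial := by
  have h1 : Complex.betaIntegral (b + 1) (a + 1) =
      ((∫ x in (0:ℝ)..1, x ^ b * (1 - x) ^ a : ℝ) : ℂ) := by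
    rw [Complex.betaIntegral]
    rw [← intervalIntegral.integral_ofReal]
    apply intervalIntegral.integral_congr
    intro x hx
    rw [uIcc_of_le (by norm_num : (0:ℝ) ≤ 1)] at hx
    have h2 : ((b:ℂ) + 1 - 1) = (b : ℂ) := by ring
    have h3 : ((a:ℂ) + 1 - 1) = (a : ℂ) := by ring
    simp only [h2, h3, Complex.cpow_natCast]
    push_cast
    ring
  have h4 := Complex.Gamma_mul_Gamma_eq_betaIntegral
    (s := (b:ℂ) + 1) (t := (a:ℂ) + 1) (by simp; positivity) (by simp; positivity)
  have hb : Complex.Gamma ((b:ℂ) + 1) = (b.factorial : ℂ) := by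
    simpa using Complex.Gamma_nat_eq_factorial b
  have ha : Complex.Gamma ((a:ℂ) + 1) = (a.factorial : ℂ) := by
    simpa using Complex.Gamma_nat_eq_factorial a
  have hab : Complex.Gamma ((b:ℂ) + 1 + ((a:ℂ) + 1)) = ((a + b + 1).factorial : ℂ) := by
    have : (b:ℂ) + 1 + ((a:ℂ) + 1) = ((a + b + 1 : ℕ) : ℂ) + 1 := by push_cast; ring
    rw [this]
    simpa using Complex.Gamma_nat_eq_factorial (a + b + 1)
  rw [hb, ha, hab, h1] at h4
  have hne : ((a + b + 1).factorial : ℂ) ≠ 0 := by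
    exact Nat.cast_ne_zero.mpr (Nat.factorial_ne_zero _)
  have : ((∫ x in (0:ℝ)..1, x ^ b * (1 - x) ^ a : ℝ) : ℂ) =
      ((b.factorial : ℝ) * a.factorial / (a + b + 1).factorial : ℝ) := by
    push_cast
    rw [eq_div_iff hne]
    linear_combination -h4
  exact_mod_cast this

noncomputable def tibs_phi : ℝ → ℝ := fun x => (1 - x)⁻¹ * (-Real.log x)
noncomputable def tibs_fn (n : ℕ) : ℝ → ℝ := fun x => x ^ n * (-Real.log x)

lemma tibs_fn_nonneg {n : ℕ} {x : ℝ} (hx : x ∈ Ioc (0:ℝ) 1) : 0 ≤ tibs_fn n x := by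
  have : 0 ≤ -Real.log x := by simpa using Real.log_nonpos hx.1.le hx.2
  exact mul_nonneg (pow_nonneg hx.1.le n) this

lemma tibs_fn_summable {x : ℝ} (hx : x ∈ Ioc (0:ℝ) 1) : Summable fun n => tibs_fn n x := by
  rcases eq_or_lt_of_le hx.2 with h | h
  · subst h; simpa [tibs_fn] using summable_zero
  · exact (summable_geometric_of_lt_one hx.1.le h).mul_right _

lemma tibs_fn_tsum {x : ℝ} (hx : x ∈ Ioc (0:ℝ) 1) : (∑' n, tibs_fn n x) = tibs_phi x := by
  rcases eq_or_lt_of_le hx.2 with h | h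
  · simp [tibs_fn, tibs_phi, h]
  · simp only [tibs_fn, tibs_phi, tsum_mul_right, tsum_geometric_of_lt_one hx.1.le h]

lemma tibs_fn_integrableOn (n : ℕ) : IntegrableOn (tibs_fn n) (Ioc 0 1) := by
  have := tibs_intervalIntegrable_pow_neg_log n
  rwa [intervalIntegrable_iff_integrableOn_Ioc_of_le (by norm_num)] at this

lemma tibs_fn_integral (n : ℕ) : ∫ x in Ioc (0:ℝ) 1, tibs_fn n x = 1 / ((n:ℝ) + 1) ^ 2 := by
  rw [← intervalIntegral.integral_of_le (by norm_num : (0:ℝ) ≤ 1)]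
  exact tibs_integral_pow_neg_log n

lemma tibs_one_div_sq_summable : Summable fun n : ℕ => 1 / ((n:ℝ) + 1) ^ 2 := by
  have h : Summable (fun n : ℕ => 1 / (n:ℝ) ^ 2) := by
    simpa using (Real.summable_one_div_nat_pow (p := 2)).2 (by norm_num)
  have := (summable_nat_add_iff (f := fun n : ℕ => 1 / (n:ℝ) ^ 2) 1).2 h
  simpa [Nat.cast_add] using this

lemma tibs_one_div_sq_tsum : ∑' n : ℕ, 1 / ((n:ℝ) + 1) ^ 2 = Real.pi ^ 2 / 6 := by
  have h := hasSum_zeta_two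
  have h2 := (hasSum_nat_add_iff' (f := fun n : ℕ => 1 / (n:ℝ) ^ 2) (g := Real.pi ^ 2 / 6) 1).2 h
  have h3 := h2.tsum_eq
  push_cast at h3
  simpa using h3

lemma tibs_fn_lintegral (n : ℕ) :
    ∫⁻ x in Ioc (0:ℝ) 1, ENNReal.ofReal (tibs_fn n x) = ENNReal.ofReal (1 / ((n:ℝ) + 1) ^ 2) := by
  rw [← ofReal_integral_eq_lintegral_ofReal (tibs_fn_integrableOn n)
    ((ae_restrict_mem measurableSet_Ioc).mono fun x hx => tibs_fn_nonneg hx), tibs_fn_integral n]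

lemma tibs_fn_aesm (n : ℕ) : AEStronglyMeasurable (tibs_fn n) (volume.restrict (Ioc (0:ℝ) 1)) :=
  ((measurable_id.pow_const n).mul Real.measurable_log.neg).aestronglyMeasurable

lemma tibs_fn_sum_lintegral :
    ∑' n, ∫⁻ x in Ioc (0:ℝ) 1, ENNReal.ofReal (tibs_fn n x) = ENNReal.ofReal (Real.pi ^ 2 / 6) := by
  simp_rw [tibs_fn_lintegral]
  rw [← ENNReal.ofReal_tsum_of_nonneg (fun n => by positivity) tibs_one_div_sq_summable,
    tibs_one_div_sq_tsum]

lemma tibs_phi_integrableOn : IntegrableOn tibs_phi (Ioc 0 1) := by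
  constructor
  · exact ((measurable_const.sub measurable_id).inv.mul
      Real.measurable_log.neg).aestronglyMeasurable
  · rw [hasFiniteIntegral_iff_norm]
    have h1 : ∫⁻ x in Ioc (0:ℝ) 1, ENNReal.ofReal ‖tibs_phi x‖ =
        ∫⁻ x in Ioc (0:ℝ) 1, ∑' n, ENNReal.ofReal (tibs_fn n x) := by
      apply setLIntegral_congr_fun measurableSet_Ioc
      intro x hx
      dsimp only
      have hphi : 0 ≤ tibs_phi x := by
        rw [← tibs_fn_tsum hx]
        exact tsum_nonneg fun n => tibs_fn_nonneg hx
      rw [Real.norm_eq_abs, abs_of_nonneg hphi, ← tibs_fn_tsum hx,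
        ENNReal.ofReal_tsum_of_nonneg (fun n => tibs_fn_nonneg hx) (tibs_fn_summable hx)]
    have hm : ∀ n : ℕ, AEMeasurable (fun x => ENNReal.ofReal (tibs_fn n x))
        (volume.restrict (Ioc (0:ℝ) 1)) := fun n =>
      (Measurable.ennreal_ofReal
        ((measurable_id.pow_const n).mul Real.measurable_log.neg)).aemeasurable
    rw [h1, lintegral_tsum hm, tibs_fn_sum_lintegral]
    exact ENNReal.ofReal_lt_top

lemma tibs_phi_integral : ∫ x in Ioc (0:ℝ) 1, tibs_phi x = Real.pi ^ 2 / 6 := by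
  have h1 : ∫ x in Ioc (0:ℝ) 1, tibs_phi x = ∫ x in Ioc (0:ℝ) 1, ∑' n, tibs_fn n x :=
    setIntegral_congr_fun measurableSet_Ioc fun x hx => (tibs_fn_tsum hx).symm
  have h2 : ∑' n, ∫⁻ x in Ioc (0:ℝ) 1, ‖tibs_fn n x‖₊ ≠ ⊤ := by
    have : ∀ n, ∫⁻ x in Ioc (0:ℝ) 1, (‖tibs_fn n x‖₊ : ℝ≥0∞) =
        ∫⁻ x in Ioc (0:ℝ) 1, ENNReal.ofReal (tibs_fn n x) := by
      intro n
      apply setLIntegral_congr_fun measurableSet_Ioc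
      intro x hx
      exact Real.enorm_eq_ofReal (tibs_fn_nonneg hx)
    simp_rw [this]
    rw [tibs_fn_sum_lintegral]
    exact ENNReal.ofReal_ne_top
  rw [h1, integral_tsum tibs_fn_aesm h2]
  simp_rw [tibs_fn_integral]
  exact tibs_one_div_sq_tsum

lemma tibs_measurableSet_T : MeasurableSet {q : ℝ × ℝ | 0 ≤ q.1 ∧ 0 ≤ q.2 ∧ q.1 + q.2 ≤ 1} := by
  apply MeasurableSet.inter
  · exact measurableSet_le measurable_const measurable_fst
  apply MeasurableSet.inter
  · exact measurableSet_le measurable_const measurable_snd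
  · exact measurableSet_le (measurable_fst.add measurable_snd) measurable_const

lemma tibs_triangle_prod (g h : ℝ → ℝ) (hgm : Measurable g) (hhm : Measurable h)
    (hg0 : ∀ x ∈ Icc (0:ℝ) 1, 0 ≤ g x) (hh0 : ∀ y ∈ Icc (0:ℝ) 1, 0 ≤ h y)
    (hhi : ∀ x ∈ Ioo (0:ℝ) 1, IntegrableOn h (Ioc 0 (1 - x)))
    (hGH : IntegrableOn (fun x => g x * ∫ y in (0:ℝ)..(1 - x), h y) (Ioc 0 1)) :
    IntegrableOn (fun q : ℝ × ℝ => g q.1 * h q.2)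
        {q : ℝ × ℝ | 0 ≤ q.1 ∧ 0 ≤ q.2 ∧ q.1 + q.2 ≤ 1} ∧
      ∫ q in {q : ℝ × ℝ | 0 ≤ q.1 ∧ 0 ≤ q.2 ∧ q.1 + q.2 ≤ 1}, g q.1 * h q.2 =
        ∫ x in (0:ℝ)..1, g x * ∫ y in (0:ℝ)..(1 - x), h y := by
  set T := {q : ℝ × ℝ | 0 ≤ q.1 ∧ 0 ≤ q.2 ∧ q.1 + q.2 ≤ 1} with hT
  have hTm : MeasurableSet T := tibs_measurableSet_T
  set f : ℝ × ℝ → ℝ := fun q => g q.1 * h q.2 with hf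
  have hfm : Measurable f := (hgm.comp measurable_fst).mul (hhm.comp measurable_snd)
  -- slice description
  have hslice : ∀ x y : ℝ, T.indicator f (x, y) =
      if x ∈ Icc (0:ℝ) 1 then (Icc 0 (1 - x)).indicator (fun y => g x * h y) y else 0 := by
    intro x y
    by_cases hx : x ∈ Icc (0:ℝ) 1
    · rw [if_pos hx]
      by_cases hy : y ∈ Icc (0:ℝ) (1 - x)
      · rw [indicator_of_mem hy, indicator_of_mem]
        exact ⟨hx.1, hy.1, by linarith [hy.2]⟩
      · rw [indicator_of_notMem hy, indicator_of_notMem]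
        intro hq
        exact hy ⟨hq.2.1, by linarith [hq.2.2]⟩
    · rw [if_neg hx]
      apply indicator_of_notMem
      intro hq
      exact hx ⟨hq.1, by linarith [hq.2.1, hq.2.2]⟩
  -- interval integral of h as set integral
  have hIcc : ∀ x : ℝ, x ∈ Icc (0:ℝ) 1 →
      (∫ y in Icc (0:ℝ) (1 - x), h y) = ∫ y in (0:ℝ)..(1 - x), h y := by
    intro x hx
    rw [intervalIntegral.integral_of_le (by linarith [hx.2]), integral_Icc_eq_integral_Ioc]
  -- a.e. x facts
  have hae : ∀ᵐ x : ℝ, x ∉ ({0, 1} : Set ℝ) := by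
    have : volume ({0, 1} : Set ℝ) = 0 :=
      ((Set.finite_singleton (1:ℝ)).insert 0).measure_zero volume
    exact measure_eq_zero_iff_ae_notMem.mp this
  -- sliced integrability, a.e.
  have hsliceInt : ∀ᵐ x : ℝ, Integrable (fun y => T.indicator f (x, y)) := by
    filter_upwards [hae] with x hx01
    have heq : (fun y => T.indicator f (x, y)) =
        if x ∈ Icc (0:ℝ) 1 then (Icc 0 (1 - x)).indicator (fun y => g x * h y) else 0 := by
      funext y
      rw [hslice x y]
      by_cases hx : x ∈ Icc (0:ℝ) 1 <;> simp [hx]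
    rw [heq]
    by_cases hx : x ∈ Icc (0:ℝ) 1
    · rw [if_pos hx]
      rw [integrable_indicator_iff measurableSet_Icc]
      have hx' : x ∈ Ioo (0:ℝ) 1 := by
        rcases hx.1.lt_or_eq with h1 | h1
        · rcases hx.2.lt_or_eq with h2 | h2
          · exact ⟨h1, h2⟩
          · exact absurd (by simp [h2]) hx01
        · exact absurd (by simp [← h1]) hx01
      have : IntegrableOn h (Icc 0 (1 - x)) := by
        refine (hhi x hx').congr_set_ae (Ioc_ae_eq_Icc).symm
      exact (this.const_mul (g x))
    · rw [if_neg hx]; exact integrable_zero _ _ _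
  -- norm integral equals the nice function, a.e.
  have hnormeq : ∀ᵐ x : ℝ, (∫ y, ‖T.indicator f (x, y)‖) =
      (Icc (0:ℝ) 1).indicator (fun x => g x * ∫ y in (0:ℝ)..(1 - x), h y) x := by
    filter_upwards [hae] with x hx01
    by_cases hx : x ∈ Icc (0:ℝ) 1
    · have hx' : x ∈ Ioo (0:ℝ) 1 := by
        rcases hx.1.lt_or_eq with h1 | h1
        · rcases hx.2.lt_or_eq with h2 | h2
          · exact ⟨h1, h2⟩
          · exact absurd (by simp [h2]) hx01
        · exact absurd (by simp [← h1]) hx01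
      rw [indicator_of_mem hx]
      have h1 : ∀ y : ℝ, ‖T.indicator f (x, y)‖ =
          (Icc 0 (1 - x)).indicator (fun y => g x * h y) y := by
        intro y
        rw [hslice x y, if_pos hx]
        by_cases hy : y ∈ Icc (0:ℝ) (1 - x)
        · rw [indicator_of_mem hy, Real.norm_eq_abs, abs_of_nonneg]
          exact mul_nonneg (hg0 x hx) (hh0 y ⟨hy.1, by linarith [hy.2, hx'.1.le]⟩)
        · rw [indicator_of_notMem hy, norm_zero]
      simp_rw [h1]
      rw [MeasureTheory.integral_indicator measurableSet_Icc, MeasureTheory.integral_const_mul, hIcc x hx]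
    · rw [indicator_of_notMem hx]
      have h1 : ∀ y : ℝ, ‖T.indicator f (x, y)‖ = 0 := by
        intro y; rw [hslice x y, if_neg hx, norm_zero]
      simp_rw [h1]
      exact integral_zero _ _
  -- the indicator target is integrable
  have htarget : Integrable ((Icc (0:ℝ) 1).indicator
      (fun x => g x * ∫ y in (0:ℝ)..(1 - x), h y)) := by
    rw [integrable_indicator_iff measurableSet_Icc]
    exact hGH.congr_set_ae Ioc_ae_eq_Icc.symm
  -- AEStronglyMeasurable on the product
  have hindm : AEStronglyMeasurable (T.indicator f) (volume.prod volume) := by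
    rw [← Measure.volume_eq_prod]
    exact (hfm.indicator hTm).aestronglyMeasurable
  -- integrability via integrable_prod_iff
  have hint : Integrable (T.indicator f) (volume.prod (volume : Measure ℝ)) := by
    rw [integrable_prod_iff hindm]
    constructor
    · exact hsliceInt
    · exact htarget.congr (by filter_upwards [hnormeq] with x hx; rw [hx])
  have hintOn : IntegrableOn f T := by
    rw [← integrable_indicator_iff hTm, Measure.volume_eq_prod]
    exact hint
  refine ⟨hintOn, ?_⟩
  have hval : ∫ q in T, f q = ∫ x : ℝ, ∫ y : ℝ, T.indicator f (x, y) := by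
    rw [← MeasureTheory.integral_indicator hTm, Measure.volume_eq_prod, integral_prod _ hint]
  rw [hval]
  have h2 : ∫ x : ℝ, ∫ y : ℝ, T.indicator f (x, y) =
      ∫ x : ℝ, (Icc (0:ℝ) 1).indicator (fun x => g x * ∫ y in (0:ℝ)..(1 - x), h y) x := by
    apply MeasureTheory.integral_congr_ae
    filter_upwards [hsliceInt, hnormeq, hae] with x hxint hxnorm hx01
    by_cases hx : x ∈ Icc (0:ℝ) 1
    · have hx' : x ∈ Ioo (0:ℝ) 1 := by
        rcases hx.1.lt_or_eq with h1 | h1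
        · rcases hx.2.lt_or_eq with h2 | h2
          · exact ⟨h1, h2⟩
          · exact absurd (by simp [h2]) hx01
        · exact absurd (by simp [← h1]) hx01
      rw [indicator_of_mem hx]
      have h1 : ∀ y : ℝ, T.indicator f (x, y) =
          (Icc 0 (1 - x)).indicator (fun y => g x * h y) y := by
        intro y; rw [hslice x y, if_pos hx]
      simp_rw [h1]
      rw [MeasureTheory.integral_indicator measurableSet_Icc, MeasureTheory.integral_const_mul, hIcc x hx]
    · rw [indicator_of_notMem hx]
      have h1 : ∀ y : ℝ, T.indicator f (x, y) = 0 := by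
        intro y; rw [hslice x y, if_neg hx]
      simp_rw [h1]
      exact integral_zero _ _
  rw [h2, MeasureTheory.integral_indicator measurableSet_Icc,
    intervalIntegral.integral_of_le (by norm_num : (0:ℝ) ≤ 1), integral_Icc_eq_integral_Ioc]

lemma tibs_volume_map_swap :
    Measure.map (⇑((MeasurableEquiv.prodComm : ℝ × ℝ ≃ᵐ ℝ × ℝ))) (volume : Measure (ℝ × ℝ)) = volume := by
  have h : (⇑((MeasurableEquiv.prodComm : ℝ × ℝ ≃ᵐ ℝ × ℝ))) = Prod.swap := rfl
  rw [h, Measure.volume_eq_prod]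
  exact (Measure.measurePreserving_swap).map_eq

lemma tibs_T_swap_preimage :
    (⇑((MeasurableEquiv.prodComm : ℝ × ℝ ≃ᵐ ℝ × ℝ))) ⁻¹' {q : ℝ × ℝ | 0 ≤ q.1 ∧ 0 ≤ q.2 ∧ q.1 + q.2 ≤ 1}
      = {q : ℝ × ℝ | 0 ≤ q.1 ∧ 0 ≤ q.2 ∧ q.1 + q.2 ≤ 1} := by
  ext ⟨x, y⟩
  simp only [Set.mem_preimage, Set.mem_setOf_eq]
  show (0 ≤ y ∧ 0 ≤ x ∧ y + x ≤ 1) ↔ (0 ≤ x ∧ 0 ≤ y ∧ x + y ≤ 1)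
  constructor <;> rintro ⟨h1, h2, h3⟩ <;> exact ⟨h2, h1, by linarith⟩

lemma tibs_triangle_swap (u v : ℝ × ℝ → ℝ) (huv : ∀ q : ℝ × ℝ, u (q.2, q.1) = v q) :
    (IntegrableOn v {q : ℝ × ℝ | 0 ≤ q.1 ∧ 0 ≤ q.2 ∧ q.1 + q.2 ≤ 1} →
      IntegrableOn u {q : ℝ × ℝ | 0 ≤ q.1 ∧ 0 ≤ q.2 ∧ q.1 + q.2 ≤ 1}) ∧
    ∫ q in {q : ℝ × ℝ | 0 ≤ q.1 ∧ 0 ≤ q.2 ∧ q.1 + q.2 ≤ 1}, u q =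
      ∫ q in {q : ℝ × ℝ | 0 ≤ q.1 ∧ 0 ≤ q.2 ∧ q.1 + q.2 ≤ 1}, v q := by
  set e := (MeasurableEquiv.prodComm : ℝ × ℝ ≃ᵐ ℝ × ℝ)
  have hcomp : (u ∘ ⇑e) = v := funext fun q => huv q
  constructor
  · intro hint
    have := (integrableOn_map_equiv e (f := u)
      (s := {q : ℝ × ℝ | 0 ≤ q.1 ∧ 0 ≤ q.2 ∧ q.1 + q.2 ≤ 1}) (μ := volume)).2
    rw [tibs_volume_map_swap] at this
    apply this
    rw [hcomp, tibs_T_swap_preimage]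
    exact hint
  · have := setIntegral_map_equiv (μ := (volume : Measure (ℝ × ℝ))) e u
      {q : ℝ × ℝ | 0 ≤ q.1 ∧ 0 ≤ q.2 ∧ q.1 + q.2 ≤ 1}
    rw [tibs_volume_map_swap, tibs_T_swap_preimage] at this
    rw [this]
    apply MeasureTheory.setIntegral_congr_fun tibs_measurableSet_T
    intro q _
    exact huv q

lemma tibs_ae_ne_one_fst :
    ∀ᵐ q : ℝ × ℝ ∂(volume.restrict {q : ℝ × ℝ | 0 ≤ q.1 ∧ 0 ≤ q.2 ∧ q.1 + q.2 ≤ 1}),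
      q.1 ≠ 1 := by
  apply ae_restrict_of_ae
  have h : {q : ℝ × ℝ | q.1 = 1} = {(1:ℝ)} ×ˢ (univ : Set ℝ) := by
    ext ⟨x, y⟩; simp [eq_comm]
  have hz : volume {q : ℝ × ℝ | q.1 = 1} = 0 := by
    rw [h, Measure.volume_eq_prod, Measure.prod_prod]
    simp
  exact measure_eq_zero_iff_ae_notMem.mp hz

lemma tibs_ae_ne_one_snd :
    ∀ᵐ q : ℝ × ℝ ∂(volume.restrict {q : ℝ × ℝ | 0 ≤ q.1 ∧ 0 ≤ q.2 ∧ q.1 + q.2 ≤ 1}),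
      q.2 ≠ 1 := by
  apply ae_restrict_of_ae
  have h : {q : ℝ × ℝ | q.2 = 1} = (univ : Set ℝ) ×ˢ {(1:ℝ)} := by
    ext ⟨x, y⟩; simp [eq_comm]
  have hz : volume {q : ℝ × ℝ | q.2 = 1} = 0 := by
    rw [h, Measure.volume_eq_prod, Measure.prod_prod]
    simp
  exact measure_eq_zero_iff_ae_notMem.mp hz

lemma tibs_ae_ne_one_Ioc : ∀ᵐ x : ℝ ∂(volume.restrict (Ioc (0:ℝ) 1)), x ≠ 1 := by
  apply ae_restrict_of_ae
  have hz : volume ({(1:ℝ)} : Set ℝ) = 0 := measure_singleton 1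
  filter_upwards [measure_eq_zero_iff_ae_notMem.mp hz] with x hx
  simpa using hx

-- Application A
lemma tibs_appA (n : ℕ) :
    IntegrableOn (fun q : ℝ × ℝ => q.2 ^ n / (1 - q.1))
        {q : ℝ × ℝ | 0 ≤ q.1 ∧ 0 ≤ q.2 ∧ q.1 + q.2 ≤ 1} ∧
      ∫ q in {q : ℝ × ℝ | 0 ≤ q.1 ∧ 0 ≤ q.2 ∧ q.1 + q.2 ≤ 1}, q.2 ^ n / (1 - q.1) =
        1 / ((n:ℝ) + 1) ^ 2 := by
  have hinner : ∀ x : ℝ, (∫ y in (0:ℝ)..(1 - x), y ^ n) = (1 - x) ^ (n + 1) / ((n:ℝ) + 1) := by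
    intro x
    rw [integral_pow]
    simp
  have hae : ∀ᵐ x : ℝ ∂(volume.restrict (Ioc (0:ℝ) 1)),
      (1 - x)⁻¹ * ∫ y in (0:ℝ)..(1 - x), y ^ n = (1 - x) ^ n / ((n:ℝ) + 1) := by
    filter_upwards [tibs_ae_ne_one_Ioc] with x hx
    rw [hinner]
    have h1 : (1:ℝ) - x ≠ 0 := sub_ne_zero.mpr (Ne.symm hx)
    field_simp
    ring
  have hpsi : IntegrableOn (fun x : ℝ => (1 - x) ^ n / ((n:ℝ) + 1)) (Ioc 0 1) :=
    (Continuous.integrableOn_Ioc (by continuity))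
  have hGH : IntegrableOn (fun x : ℝ => (1 - x)⁻¹ * ∫ y in (0:ℝ)..(1 - x), y ^ n) (Ioc 0 1) :=
    hpsi.congr (hae.mono fun x hx => hx.symm)
  have hm := tibs_triangle_prod (fun x => (1 - x)⁻¹) (fun y => y ^ n)
    (measurable_const.sub measurable_id).inv (measurable_id.pow_const n)
    (fun x hx => inv_nonneg.mpr (by linarith [hx.2]))
    (fun y hy => pow_nonneg hy.1 n)
    (fun x hx => (Continuous.integrableOn_Ioc (by continuity)))
    hGH
  have heq : (fun q : ℝ × ℝ => q.2 ^ n / (1 - q.1)) =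
      fun q : ℝ × ℝ => (1 - q.1)⁻¹ * q.2 ^ n := by
    funext q; ring
  rw [heq]
  refine ⟨hm.1, ?_⟩
  rw [hm.2]
  have hival : ∫ x in (0:ℝ)..1, (1 - x)⁻¹ * ∫ y in (0:ℝ)..(1 - x), y ^ n =
      ∫ x in (0:ℝ)..1, (1 - x) ^ n / ((n:ℝ) + 1) := by
    apply intervalIntegral.integral_congr_ae
    rw [uIoc_of_le (by norm_num : (0:ℝ) ≤ 1)]
    have h1 : volume ({(1:ℝ)} : Set ℝ) = 0 := measure_singleton 1
    filter_upwards [measure_eq_zero_iff_ae_notMem.mp h1] with x hx1 hx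
    have h1 : (1:ℝ) - x ≠ 0 := sub_ne_zero.mpr (Ne.symm (by simpa using hx1))
    rw [hinner]
    field_simp
    ring
  rw [hival, intervalIntegral.integral_div]
  have : ∫ x in (0:ℝ)..1, (1 - x) ^ n = ∫ x in (0:ℝ)..1, x ^ n := by
    have := intervalIntegral.integral_comp_sub_left (a := (0:ℝ)) (b := 1)
      (fun t : ℝ => t ^ n) 1
    simpa using this
  rw [this, integral_pow]
  have hne : ((n:ℝ) + 1) ≠ 0 := by positivity
  field_simp
  ring

-- Application B
lemma tibs_appB (a b : ℕ) :
    IntegrableOn (fun q : ℝ × ℝ => q.1 ^ a * q.2 ^ b / (1 - q.2))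
        {q : ℝ × ℝ | 0 ≤ q.1 ∧ 0 ≤ q.2 ∧ q.1 + q.2 ≤ 1} ∧
      ∫ q in {q : ℝ × ℝ | 0 ≤ q.1 ∧ 0 ≤ q.2 ∧ q.1 + q.2 ≤ 1}, q.1 ^ a * q.2 ^ b / (1 - q.2) =
        (a.factorial : ℝ) * b.factorial / ((a + 1) * (a + b + 1).factorial) := by
  have hinner : ∀ x : ℝ, (∫ y in (0:ℝ)..(1 - x), y ^ a) = (1 - x) ^ (a + 1) / ((a:ℝ) + 1) := by
    intro x; rw [integral_pow]; simp
  have hae : ∀ᵐ x : ℝ ∂(volume.restrict (Ioc (0:ℝ) 1)),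
      x ^ b / (1 - x) * ∫ y in (0:ℝ)..(1 - x), y ^ a
        = x ^ b * (1 - x) ^ a / ((a:ℝ) + 1) := by
    filter_upwards [tibs_ae_ne_one_Ioc] with x hx
    have h1 : (1:ℝ) - x ≠ 0 := sub_ne_zero.mpr (Ne.symm hx)
    rw [hinner]
    field_simp
    ring
  have hpsi : IntegrableOn (fun x : ℝ => x ^ b * (1 - x) ^ a / ((a:ℝ) + 1)) (Ioc 0 1) :=
    Continuous.integrableOn_Ioc (by continuity)
  have hGH : IntegrableOn
      (fun x : ℝ => x ^ b / (1 - x) * ∫ y in (0:ℝ)..(1 - x), y ^ a) (Ioc 0 1) :=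
    hpsi.congr (hae.mono fun x hx => hx.symm)
  have hm := tibs_triangle_prod (fun x => x ^ b / (1 - x)) (fun y => y ^ a)
    ((measurable_id.pow_const b).div (measurable_const.sub measurable_id))
    (measurable_id.pow_const a)
    (fun x hx => div_nonneg (pow_nonneg hx.1 b) (by linarith [hx.2]))
    (fun y hy => pow_nonneg hy.1 a)
    (fun x hx => Continuous.integrableOn_Ioc (by continuity))
    hGH
  have hswap := tibs_triangle_swap (fun q : ℝ × ℝ => q.1 ^ a * q.2 ^ b / (1 - q.2))
    (fun q : ℝ × ℝ => q.1 ^ b / (1 - q.1) * q.2 ^ a)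
    (fun q => by show q.2 ^ a * q.1 ^ b / (1 - q.1) = _; ring)
  constructor
  · exact hswap.1 hm.1
  · rw [hswap.2, hm.2]
    have hval : ∫ x in (0:ℝ)..1, x ^ b / (1 - x) * ∫ y in (0:ℝ)..(1 - x), y ^ a
        = ∫ x in (0:ℝ)..1, x ^ b * (1 - x) ^ a / ((a:ℝ) + 1) := by
      apply intervalIntegral.integral_congr_ae
      rw [uIoc_of_le (by norm_num : (0:ℝ) ≤ 1)]
      have h1 : volume ({(1:ℝ)} : Set ℝ) = 0 := measure_singleton 1
      filter_upwards [measure_eq_zero_iff_ae_notMem.mp h1] with x hx1 hx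
      have h1 : (1:ℝ) - x ≠ 0 := sub_ne_zero.mpr (Ne.symm (by simpa using hx1))
      rw [hinner]
      field_simp
      ring
    rw [hval, intervalIntegral.integral_div, tibs_beta_nat a b]
    have h2 : ((a:ℝ) + 1) ≠ 0 := by positivity
    have h3 : ((a + b + 1).factorial : ℝ) ≠ 0 := by
      exact_mod_cast Nat.factorial_ne_zero _
    field_simp

-- Application C
lemma tibs_appC :
    IntegrableOn (fun q : ℝ × ℝ => (1 - q.1)⁻¹ * (1 - q.2)⁻¹)
        {q : ℝ × ℝ | 0 ≤ q.1 ∧ 0 ≤ q.2 ∧ q.1 + q.2 ≤ 1} ∧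
      ∫ q in {q : ℝ × ℝ | 0 ≤ q.1 ∧ 0 ≤ q.2 ∧ q.1 + q.2 ≤ 1}, (1 - q.1)⁻¹ * (1 - q.2)⁻¹ =
        Real.pi ^ 2 / 6 := by
  have hinner : ∀ x : ℝ, x ∈ Ioc (0:ℝ) 1 →
      (∫ y in (0:ℝ)..(1 - x), (1 - y)⁻¹) = -Real.log x := by
    intro x hx
    have h1 : ∫ y in (0:ℝ)..(1 - x), (1 - y)⁻¹
        = ∫ t in (1 - (1 - x))..(1 - 0), t⁻¹ := by
      exact intervalIntegral.integral_comp_sub_left (fun t : ℝ => t⁻¹) 1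
    rw [h1]
    norm_num
    rw [integral_inv (by rw [uIcc_of_le hx.2]; intro hmem; exact absurd hmem.1 (by linarith [hx.1])),
      one_div, Real.log_inv]
  have hhi : ∀ x ∈ Ioo (0:ℝ) 1, IntegrableOn (fun y : ℝ => (1 - y)⁻¹) (Ioc 0 (1 - x)) := by
    intro x hx
    apply IntegrableOn.mono_set (t := Icc (0:ℝ) (1 - x)) _ Ioc_subset_Icc_self
    apply ContinuousOn.integrableOn_Icc
    apply ContinuousOn.inv₀
    · exact (Continuous.continuousOn (by continuity))
    · intro z hz
      have h2 := hz.2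
      have h1 := hx.1
      intro hcon
      rw [sub_eq_zero] at hcon
      linarith
  have haeq : ∀ x ∈ Ioc (0:ℝ) 1,
      (1 - x)⁻¹ * ∫ y in (0:ℝ)..(1 - x), (1 - y)⁻¹ = tibs_phi x := by
    intro x hx
    rw [hinner x hx, tibs_phi]
  have hGH : IntegrableOn
      (fun x : ℝ => (1 - x)⁻¹ * ∫ y in (0:ℝ)..(1 - x), (1 - y)⁻¹) (Ioc 0 1) := by
    apply tibs_phi_integrableOn.congr
    filter_upwards [ae_restrict_mem measurableSet_Ioc] with x hx
    exact (haeq x hx).symm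
  have hm := tibs_triangle_prod (fun x => (1 - x)⁻¹) (fun y => (1 - y)⁻¹)
    (measurable_const.sub measurable_id).inv (measurable_const.sub measurable_id).inv
    (fun x hx => inv_nonneg.mpr (by linarith [hx.2]))
    (fun y hy => inv_nonneg.mpr (by linarith [hy.2]))
    hhi hGH
  refine ⟨hm.1, ?_⟩
  rw [hm.2]
  have hval : ∫ x in (0:ℝ)..1, (1 - x)⁻¹ * ∫ y in (0:ℝ)..(1 - x), (1 - y)⁻¹
      = ∫ x in (0:ℝ)..1, tibs_phi x := by
    apply intervalIntegral.integral_congr_ae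
    rw [uIoc_of_le (by norm_num : (0:ℝ) ≤ 1)]
    filter_upwards with x hx
    exact haeq x hx
  rw [hval, intervalIntegral.integral_of_le (by norm_num : (0:ℝ) ≤ 1)]
  exact tibs_phi_integral

lemma tibs_P0 (b : ℕ) :
    IntegrableOn (fun q : ℝ × ℝ => q.2 ^ b / ((1 - q.1) * (1 - q.2)))
        {q : ℝ × ℝ | 0 ≤ q.1 ∧ 0 ≤ q.2 ∧ q.1 + q.2 ≤ 1} ∧
      ∫ q in {q : ℝ × ℝ | 0 ≤ q.1 ∧ 0 ≤ q.2 ∧ q.1 + q.2 ≤ 1},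
          q.2 ^ b / ((1 - q.1) * (1 - q.2)) =
        -(∑ i ∈ Finset.Icc 1 b, 1 / (i : ℝ) ^ 2) + Real.pi ^ 2 / 6 := by
  induction b with
  | zero =>
    have heq : (fun q : ℝ × ℝ => q.2 ^ 0 / ((1 - q.1) * (1 - q.2))) =
        fun q : ℝ × ℝ => (1 - q.1)⁻¹ * (1 - q.2)⁻¹ := by
      funext q; rw [pow_zero, one_div, mul_inv]
    rw [heq]
    refine ⟨tibs_appC.1, ?_⟩
    rw [tibs_appC.2]
    simp
  | succ b ih =>
    have hae : ∀ᵐ q : ℝ × ℝ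
        ∂(volume.restrict {q : ℝ × ℝ | 0 ≤ q.1 ∧ 0 ≤ q.2 ∧ q.1 + q.2 ≤ 1}),
        q.2 ^ (b + 1) / ((1 - q.1) * (1 - q.2)) =
          q.2 ^ b / ((1 - q.1) * (1 - q.2)) - q.2 ^ b / (1 - q.1) := by
      filter_upwards [tibs_ae_ne_one_snd] with q hq
      have h2 : (1:ℝ) - q.2 ≠ 0 := sub_ne_zero.mpr (Ne.symm hq)
      by_cases h1 : (1:ℝ) - q.1 = 0
      · rw [h1]; simp
      · field_simp
        ring
    have hint : IntegrableOn (fun q : ℝ × ℝ => q.2 ^ (b + 1) / ((1 - q.1) * (1 - q.2)))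
        {q : ℝ × ℝ | 0 ≤ q.1 ∧ 0 ≤ q.2 ∧ q.1 + q.2 ≤ 1} :=
      (ih.1.sub (tibs_appA b).1).congr (hae.mono fun q hq => hq.symm)
    refine ⟨hint, ?_⟩
    rw [MeasureTheory.integral_congr_ae hae, integral_sub ih.1 (tibs_appA b).1, ih.2, (tibs_appA b).2,
      Finset.sum_Icc_succ_top (by omega : 1 ≤ b + 1)]
    push_cast
    ring

/-- `(x,y) ↦ x^{α₁} y^{α₂}/((1-x)(1-y))` is integrable on the standard triangle and
`∫_T x^{α₁} y^{α₂}/((1-x)(1-y)) = −∑_{i=1}^{α₂} 1/i² + π²/6 − ∑_{j=1}^{α₁} (1/j)·α₂!(j−1)!/(α₂+j)!`. -/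
theorem triangle_integral_both_singular (α₁ α₂ : ℕ) :
    IntegrableOn (fun q : ℝ × ℝ => q.1 ^ α₁ * q.2 ^ α₂ / ((1 - q.1) * (1 - q.2)))
        {q : ℝ × ℝ | 0 ≤ q.1 ∧ 0 ≤ q.2 ∧ q.1 + q.2 ≤ 1} ∧
      (∫ q in {q : ℝ × ℝ | 0 ≤ q.1 ∧ 0 ≤ q.2 ∧ q.1 + q.2 ≤ 1},
          q.1 ^ α₁ * q.2 ^ α₂ / ((1 - q.1) * (1 - q.2))) =
        -(∑ i ∈ Finset.Icc 1 α₂, 1 / (i : ℝ) ^ 2) + Real.pi ^ 2 / 6 -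
          ∑ j ∈ Finset.Icc 1 α₁,
            (1 / (j : ℝ)) *
              ((α₂.factorial * (j - 1).factorial : ℕ) : ℝ) / (((α₂ + j).factorial : ℕ) : ℝ) := by
  induction α₁ with
  | zero =>
    have heq : (fun q : ℝ × ℝ => q.1 ^ 0 * q.2 ^ α₂ / ((1 - q.1) * (1 - q.2))) =
        fun q : ℝ × ℝ => q.2 ^ α₂ / ((1 - q.1) * (1 - q.2)) := by
      funext q; rw [pow_zero, one_mul]
    rw [heq]
    refine ⟨(tibs_P0 α₂).1, ?_⟩
    rw [(tibs_P0 α₂).2]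
    simp
  | succ a ih =>
    have hae : ∀ᵐ q : ℝ × ℝ
        ∂(volume.restrict {q : ℝ × ℝ | 0 ≤ q.1 ∧ 0 ≤ q.2 ∧ q.1 + q.2 ≤ 1}),
        q.1 ^ (a + 1) * q.2 ^ α₂ / ((1 - q.1) * (1 - q.2)) =
          q.1 ^ a * q.2 ^ α₂ / ((1 - q.1) * (1 - q.2)) - q.1 ^ a * q.2 ^ α₂ / (1 - q.2) := by
      filter_upwards [tibs_ae_ne_one_fst] with q hq
      have h1 : (1:ℝ) - q.1 ≠ 0 := sub_ne_zero.mpr (Ne.symm hq)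
      by_cases h2 : (1:ℝ) - q.2 = 0
      · rw [h2]; simp
      · field_simp
        ring
    have hint : IntegrableOn
        (fun q : ℝ × ℝ => q.1 ^ (a + 1) * q.2 ^ α₂ / ((1 - q.1) * (1 - q.2)))
        {q : ℝ × ℝ | 0 ≤ q.1 ∧ 0 ≤ q.2 ∧ q.1 + q.2 ≤ 1} :=
      (ih.1.sub (tibs_appB a α₂).1).congr (hae.mono fun q hq => hq.symm)
    refine ⟨hint, ?_⟩
    rw [MeasureTheory.integral_congr_ae hae, integral_sub ih.1 (tibs_appB a α₂).1, ih.2,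
      (tibs_appB a α₂).2, Finset.sum_Icc_succ_top (by omega : 1 ≤ a + 1)]
    have hidx : α₂ + (a + 1) = a + α₂ + 1 := by omega
    have hidx2 : a + 1 - 1 = a := by omega
    rw [hidx, hidx2]
    have h2 : ((a:ℝ) + 1) ≠ 0 := by positivity
    have h3 : ((a + α₂ + 1).factorial : ℝ) ≠ 0 := by exact_mod_cast Nat.factorial_ne_zero _
    push_cast
    field_simp
    ring
end

section
/- Let p : ℝ² → ℝ be a polynomial function of total degree at most 2, let v₀, v₁, v₂ ∈ ℝ² be arbitrary points, and let m = (v₀+v₁+v₂)/3. Then 6·p(m) − 2·(p(v₀)+p(v₁)+p(v₂)) + ∑_{k=0}^{2} (∇p)(v_k) · (v_k − m) = 0, where (∇p)(v_k) · (v_k − m) denotes the Fréchet derivative of p at v_k applied to the vector v_k − m. -/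
open Finset

lemma mono_case (c : ℝ) (a b : ℕ) (hab : a + b ≤ 2) (v : Fin 3 → Fin 2 → ℝ) :
    6 * (c * ((3:ℝ)⁻¹ • (v 0 + v 1 + v 2)) 0 ^ a * ((3:ℝ)⁻¹ • (v 0 + v 1 + v 2)) 1 ^ b) -
      2 * ((c * (v 0) 0 ^ a * (v 0) 1 ^ b) + (c * (v 1) 0 ^ a * (v 1) 1 ^ b) +
        (c * (v 2) 0 ^ a * (v 2) 1 ^ b)) +
      ∑ k : Fin 3,
        fderiv ℝ (fun x : Fin 2 → ℝ => c * x 0 ^ a * x 1 ^ b) (v k)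
          (v k - (3:ℝ)⁻¹ • (v 0 + v 1 + v 2)) = 0 := by
  have hF : ∀ x : Fin 2 → ℝ, HasFDerivAt (fun y : Fin 2 → ℝ => c * y 0 ^ a * y 1 ^ b)
      ((c * x 0 ^ a) • ((b : ℝ) * x 1 ^ (b - 1)) • (ContinuousLinearMap.proj 1 : (Fin 2 → ℝ) →L[ℝ] ℝ) +
        (x 1 ^ b) • (c • ((a : ℝ) * x 0 ^ (a - 1)) • (ContinuousLinearMap.proj 0 : (Fin 2 → ℝ) →L[ℝ] ℝ))) x := by
    intro x
    have h0 : HasFDerivAt (fun y : Fin 2 → ℝ => y 0 ^ a)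
        (((a : ℝ) * x 0 ^ (a - 1)) • (ContinuousLinearMap.proj 0 : (Fin 2 → ℝ) →L[ℝ] ℝ)) x :=
      (hasDerivAt_pow a (x 0)).comp_hasFDerivAt x
        (ContinuousLinearMap.proj 0 : (Fin 2 → ℝ) →L[ℝ] ℝ).hasFDerivAt
    have h1 : HasFDerivAt (fun y : Fin 2 → ℝ => y 1 ^ b)
        (((b : ℝ) * x 1 ^ (b - 1)) • (ContinuousLinearMap.proj 1 : (Fin 2 → ℝ) →L[ℝ] ℝ)) x :=
      (hasDerivAt_pow b (x 1)).comp_hasFDerivAt x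
        (ContinuousLinearMap.proj 1 : (Fin 2 → ℝ) →L[ℝ] ℝ).hasFDerivAt
    exact (h0.const_mul c).mul h1
  have hfd : ∀ k : Fin 3, fderiv ℝ (fun x : Fin 2 → ℝ => c * x 0 ^ a * x 1 ^ b) (v k) =
      ((c * (v k) 0 ^ a) • ((b : ℝ) * (v k) 1 ^ (b - 1)) • (ContinuousLinearMap.proj 1 : (Fin 2 → ℝ) →L[ℝ] ℝ) +
        ((v k) 1 ^ b) • (c • ((a : ℝ) * (v k) 0 ^ (a - 1)) • (ContinuousLinearMap.proj 0 : (Fin 2 → ℝ) →L[ℝ] ℝ))) :=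
    fun k => (hF (v k)).fderiv
  simp only [hfd, ContinuousLinearMap.add_apply, ContinuousLinearMap.smul_apply,
    ContinuousLinearMap.proj_apply, Fin.sum_univ_three, Pi.sub_apply, Pi.add_apply,
    Pi.smul_apply, smul_eq_mul]
  have ha : a ≤ 2 := le_trans (Nat.le_add_right a b) hab
  have hb : b ≤ 2 := le_trans (Nat.le_add_left b a) hab
  interval_cases a <;> interval_cases b <;> first | (exact absurd hab (by omega)) | (norm_num; ring)

/-- For a polynomial `p : ℝ² → ℝ` of total degree at most 2, any points `v₀,v₁,v₂`
and `m = (v₀+v₁+v₂)/3`: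
`6 p(m) − 2(p(v₀)+p(v₁)+p(v₂)) + ∑_k ∇p(v_k)·(v_k − m) = 0`. -/
theorem quadratic_functional_vanishes (P : MvPolynomial (Fin 2) ℝ)
    (hP : P.totalDegree ≤ 2) (v : Fin 3 → Fin 2 → ℝ) :
    6 * MvPolynomial.eval ((3 : ℝ)⁻¹ • (v 0 + v 1 + v 2)) P -
        2 * (MvPolynomial.eval (v 0) P + MvPolynomial.eval (v 1) P +
          MvPolynomial.eval (v 2) P) +
      ∑ k : Fin 3,
        fderiv ℝ (fun x : Fin 2 → ℝ => MvPolynomial.eval x P) (v k)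
          (v k - (3 : ℝ)⁻¹ • (v 0 + v 1 + v 2)) = 0 := by
  classical
  set m : Fin 2 → ℝ := (3 : ℝ)⁻¹ • (v 0 + v 1 + v 2) with hm
  have heval : ∀ x : Fin 2 → ℝ, MvPolynomial.eval x P =
      ∑ d ∈ P.support, P.coeff d * x 0 ^ d 0 * x 1 ^ d 1 := by
    intro x
    rw [MvPolynomial.eval_eq']
    exact Finset.sum_congr rfl fun d _ => by rw [Fin.prod_univ_two, mul_assoc]
  -- derivative of each monomial
  set D : (Fin 2 →₀ ℕ) → (Fin 2 → ℝ) → ((Fin 2 → ℝ) →L[ℝ] ℝ) := fun d x =>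
    ((P.coeff d * x 0 ^ d 0) • ((d 1 : ℝ) * x 1 ^ (d 1 - 1)) •
        (ContinuousLinearMap.proj 1 : (Fin 2 → ℝ) →L[ℝ] ℝ) +
      (x 1 ^ d 1) • (P.coeff d • ((d 0 : ℝ) * x 0 ^ (d 0 - 1)) •
        (ContinuousLinearMap.proj 0 : (Fin 2 → ℝ) →L[ℝ] ℝ))) with hD
  have hmono : ∀ (d : Fin 2 →₀ ℕ) (x : Fin 2 → ℝ),
      HasFDerivAt (fun y : Fin 2 → ℝ => P.coeff d * y 0 ^ d 0 * y 1 ^ d 1) (D d x) x := by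
    intro d x
    have h0 : HasFDerivAt (fun y : Fin 2 → ℝ => y 0 ^ d 0)
        (((d 0 : ℝ) * x 0 ^ (d 0 - 1)) • (ContinuousLinearMap.proj 0 : (Fin 2 → ℝ) →L[ℝ] ℝ)) x :=
      (hasDerivAt_pow (d 0) (x 0)).comp_hasFDerivAt x
        (ContinuousLinearMap.proj 0 : (Fin 2 → ℝ) →L[ℝ] ℝ).hasFDerivAt
    have h1 : HasFDerivAt (fun y : Fin 2 → ℝ => y 1 ^ d 1)
        (((d 1 : ℝ) * x 1 ^ (d 1 - 1)) • (ContinuousLinearMap.proj 1 : (Fin 2 → ℝ) →L[ℝ] ℝ)) x :=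
      (hasDerivAt_pow (d 1) (x 1)).comp_hasFDerivAt x
        (ContinuousLinearMap.proj 1 : (Fin 2 → ℝ) →L[ℝ] ℝ).hasFDerivAt
    exact (h0.const_mul (P.coeff d)).mul h1
  have hfun : (fun x : Fin 2 → ℝ => MvPolynomial.eval x P) =
      fun y : Fin 2 → ℝ => ∑ d ∈ P.support, P.coeff d * y 0 ^ d 0 * y 1 ^ d 1 := funext heval
  have hfsum : ∀ x : Fin 2 → ℝ,
      HasFDerivAt (fun y : Fin 2 → ℝ => MvPolynomial.eval y P) (∑ d ∈ P.support, D d x) x := by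
    intro x
    rw [hfun]
    exact HasFDerivAt.fun_sum fun d _ => hmono d x
  have hfderiv : ∀ k : Fin 3,
      fderiv ℝ (fun x : Fin 2 → ℝ => MvPolynomial.eval x P) (v k) = ∑ d ∈ P.support, D d (v k) :=
    fun k => (hfsum (v k)).fderiv
  have key : ∀ d ∈ P.support,
      6 * (P.coeff d * m 0 ^ d 0 * m 1 ^ d 1) -
        2 * ((P.coeff d * (v 0) 0 ^ d 0 * (v 0) 1 ^ d 1) +
          (P.coeff d * (v 1) 0 ^ d 0 * (v 1) 1 ^ d 1) +
          (P.coeff d * (v 2) 0 ^ d 0 * (v 2) 1 ^ d 1)) +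
        ∑ k : Fin 3, (D d (v k)) (v k - m) = 0 := by
    intro d hd
    have hdeg : d 0 + d 1 ≤ 2 := by
      have h := MvPolynomial.le_totalDegree hd
      have h2 : (d.sum fun _ e => e) = d 0 + d 1 := by
        rw [Finsupp.sum_fintype _ _ fun _ => rfl, Fin.sum_univ_two]
      omega
    have := mono_case (P.coeff d) (d 0) (d 1) hdeg v
    have hrw : ∀ k : Fin 3,
        fderiv ℝ (fun x : Fin 2 → ℝ => P.coeff d * x 0 ^ d 0 * x 1 ^ d 1) (v k) = D d (v k) :=
      fun k => (hmono d (v k)).fderiv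
    simpa [hrw, hm, mul_add] using this
  calc 6 * MvPolynomial.eval m P -
        2 * (MvPolynomial.eval (v 0) P + MvPolynomial.eval (v 1) P + MvPolynomial.eval (v 2) P) +
      ∑ k : Fin 3, fderiv ℝ (fun x : Fin 2 → ℝ => MvPolynomial.eval x P) (v k) (v k - m)
      = ∑ d ∈ P.support, (6 * (P.coeff d * m 0 ^ d 0 * m 1 ^ d 1) -
          2 * ((P.coeff d * (v 0) 0 ^ d 0 * (v 0) 1 ^ d 1) +
            (P.coeff d * (v 1) 0 ^ d 0 * (v 1) 1 ^ d 1) +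
            (P.coeff d * (v 2) 0 ^ d 0 * (v 2) 1 ^ d 1)) +
          ∑ k : Fin 3, (D d (v k)) (v k - m)) := by
        simp only [hfderiv, ContinuousLinearMap.sum_apply]
        simp only [heval]
        rw [Finset.sum_comm]
        rw [Finset.sum_add_distrib, Finset.sum_sub_distrib, ← Finset.mul_sum, ← Finset.mul_sum,
          Finset.sum_add_distrib, Finset.sum_add_distrib]
    _ = 0 := Finset.sum_eq_zero key
end

section
/- Let v₀, v₁, v₂ ∈ ℝ² be affinely independent with associated barycentric coordinate functions λ₀, λ₁, λ₂ : ℝ² → ℝ (the unique affine maps with λ_i(v_j) = δ_{ij} and λ₀+λ₁+λ₂ ≡ 1), let m = (v₀+v₁+v₂)/3, and let i, j ∈ {0,1,2} with i ≠ j. Then the function q = λ_i² λ_j − λ_i λ_j² satisfies 6·q(m) − 2·(q(v₀)+q(v₁)+q(v₂)) + ∑_{k=0}^{2} (∇q)(v_k) · (v_k − m) = 0, where (∇q)(v_k) · (v_k − m) denotes the Fréchet derivative of q at v_k applied to v_k − m. -/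
open Finset

/-- For barycentric coordinates `λ₀,λ₁,λ₂` of an affinely independent triple
`v₀,v₁,v₂ ∈ ℝ²`, the cubic `q = λ_i² λ_j − λ_i λ_j²` (for `i ≠ j`) satisfies
`6 q(m) − 2(q(v₀)+q(v₁)+q(v₂)) + ∑_k ∇q(v_k)·(v_k − m) = 0` with `m` the centroid. -/
theorem zienkiewicz_cubic_functional_vanishes (v : Fin 3 → Fin 2 → ℝ)
    (hv : AffineIndependent ℝ v) (A : Fin 3 → ((Fin 2 → ℝ) →ᵃ[ℝ] ℝ))
    (hA : ∀ i j : Fin 3, A i (v j) = if i = j then 1 else 0)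
    (hsum : ∀ x : Fin 2 → ℝ, ∑ i : Fin 3, A i x = 1)
    (i j : Fin 3) (hij : i ≠ j) :
    6 * ((A i ((3 : ℝ)⁻¹ • (v 0 + v 1 + v 2))) ^ 2 * A j ((3 : ℝ)⁻¹ • (v 0 + v 1 + v 2)) -
          A i ((3 : ℝ)⁻¹ • (v 0 + v 1 + v 2)) * (A j ((3 : ℝ)⁻¹ • (v 0 + v 1 + v 2))) ^ 2) -
        2 * (((A i (v 0)) ^ 2 * A j (v 0) - A i (v 0) * (A j (v 0)) ^ 2) +
          ((A i (v 1)) ^ 2 * A j (v 1) - A i (v 1) * (A j (v 1)) ^ 2) +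
          ((A i (v 2)) ^ 2 * A j (v 2) - A i (v 2) * (A j (v 2)) ^ 2)) +
      ∑ k : Fin 3,
        fderiv ℝ (fun x : Fin 2 → ℝ => (A i x) ^ 2 * A j x - A i x * (A j x) ^ 2) (v k)
          (v k - (3 : ℝ)⁻¹ • (v 0 + v 1 + v 2)) = 0 := by
  set m : Fin 2 → ℝ := (3 : ℝ)⁻¹ • (v 0 + v 1 + v 2) with hm
  set L : (Fin 2 → ℝ) →L[ℝ] ℝ := LinearMap.toContinuousLinearMap (A i).linear with hLdef
  set M : (Fin 2 → ℝ) →L[ℝ] ℝ := LinearMap.toContinuousLinearMap (A j).linear with hMdef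
  have hdecomp : ∀ (B : (Fin 2 → ℝ) →ᵃ[ℝ] ℝ) (x : Fin 2 → ℝ),
      B x = B.linear x + B 0 := by
    intro B x
    conv_lhs => rw [B.decomp]
    rfl
  have hfd : ∀ (B : (Fin 2 → ℝ) →ᵃ[ℝ] ℝ) (x : Fin 2 → ℝ),
      HasFDerivAt (⇑B) (LinearMap.toContinuousLinearMap B.linear) x := by
    intro B x
    have h1 : (⇑B : (Fin 2 → ℝ) → ℝ) =
        fun y => (LinearMap.toContinuousLinearMap B.linear) y + B 0 := by
      funext y
      simpa using hdecomp B y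
    rw [h1]
    exact ((LinearMap.toContinuousLinearMap B.linear).hasFDerivAt).add_const _
  -- barycentric values at the centroid
  have hsum3 : ∀ k : Fin 3, A k (v 0) + A k (v 1) + A k (v 2) = 1 := by
    intro k; fin_cases k <;> simp [hA]
  have hcent : ∀ k : Fin 3, A k m = 3⁻¹ := by
    intro k
    have h0 := hdecomp (A k) (v 0)
    have h1 := hdecomp (A k) (v 1)
    have h2 := hdecomp (A k) (v 2)
    have hmm := hdecomp (A k) m
    have hlin : (A k).linear m =
        3⁻¹ * ((A k).linear (v 0) + (A k).linear (v 1) + (A k).linear (v 2)) := by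
      rw [hm, map_smul, map_add, map_add]
      simp [smul_eq_mul]
    have hs := hsum3 k
    rw [hlin] at hmm
    linarith
  -- linear parts compute differences
  have hL : ∀ x y : Fin 2 → ℝ, L (x - y) = A i x - A i y := by
    intro x y
    have := (A i).linearMap_vsub x y
    simpa [hLdef] using this
  have hM : ∀ x y : Fin 2 → ℝ, M (x - y) = A j x - A j y := by
    intro x y
    have := (A j).linearMap_vsub x y
    simpa [hMdef] using this
  -- squares of barycentric values
  have hsq : ∀ k l : Fin 3, (A k (v l)) ^ 2 = A k (v l) := by
    intro k l; rw [hA]; split_ifs <;> norm_num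
  -- derivative formula
  have hq : ∀ (x w : Fin 2 → ℝ),
      fderiv ℝ (fun x : Fin 2 → ℝ => (A i x) ^ 2 * A j x - A i x * (A j x) ^ 2) x w =
        (A i x) ^ 2 * M w + A j x * (2 * A i x * L w) -
          (A i x * (2 * A j x * M w) + (A j x) ^ 2 * L w) := by
    intro x w
    have hf : HasFDerivAt (⇑(A i)) L x := hfd (A i) x
    have hg : HasFDerivAt (⇑(A j)) M x := hfd (A j) x
    have hfun : (fun x : Fin 2 → ℝ => (A i x) ^ 2 * A j x - A i x * (A j x) ^ 2) =
        fun x : Fin 2 → ℝ => (A i x * A i x) * A j x - A i x * (A j x * A j x) := by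
      funext y; ring
    rw [hfun]
    have hD := (((hf.mul hf).mul hg).sub (hf.mul (hg.mul hg))).fderiv
    rw [show (fun x : Fin 2 → ℝ => A i x * A i x * A j x - A i x * (A j x * A j x)) =
      ⇑(A i) * ⇑(A i) * ⇑(A j) - ⇑(A i) * (⇑(A j) * ⇑(A j)) from rfl, hD]
    simp only [ContinuousLinearMap.coe_sub', Pi.sub_apply, ContinuousLinearMap.add_apply,
      ContinuousLinearMap.coe_smul', Pi.smul_apply, smul_eq_mul, Pi.mul_apply]
    ring
  rw [Fin.sum_univ_three, hq, hq, hq, hL, hL, hL, hM, hM, hM,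
    hcent i, hcent j]
  linear_combination (3 : ℝ)⁻¹ * hsum3 j - (3 : ℝ)⁻¹ * hsum3 i +
    (A j (v 0) - 3⁻¹) * hsq i 0 + (A j (v 1) - 3⁻¹) * hsq i 1 +
    (A j (v 2) - 3⁻¹) * hsq i 2 - (A i (v 0) - 3⁻¹) * hsq j 0 -
    (A i (v 1) - 3⁻¹) * hsq j 1 - (A i (v 2) - 3⁻¹) * hsq j 2
end

section
/- Let B be a bivariate real polynomial such that x² divides B, y² divides B, and (1 − x − y) divides B in ℝ[x,y]. If the univariate function t ↦ (∂_x B + ∂_y B)(t, 1−t) agrees with a polynomial of degree at most 2 in t, then (∂_x B + ∂_y B)(t, 1−t) = 0 for all t ∈ ℝ. In particular, no polynomial B with these divisibility properties can have a normal derivative along the line x + y = 1 that is a quadratic polynomial in the line parameter and is nonzero at the midpoint (1/2, 1/2). -/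
open MvPolynomial

private lemma eval_line_aux (Q : MvPolynomial (Fin 2) ℝ) (t : ℝ) :
    eval ![t, 1 - t] Q =
      Polynomial.eval t (aeval ![Polynomial.X, 1 - Polynomial.X] Q) := by
  have h : (Polynomial.evalRingHom t).comp
      ((aeval (R := ℝ) ![Polynomial.X, (1 : Polynomial ℝ) - Polynomial.X]) :
        MvPolynomial (Fin 2) ℝ →+* Polynomial ℝ) =
      (eval ![t, 1 - t]) := by
    apply MvPolynomial.ringHom_ext
    · intro r; simp
    · intro i; fin_cases i <;> simp
  exact (RingHom.congr_fun h Q).symm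

/-- If `x² ∣ B`, `y² ∣ B` and `(1−x−y) ∣ B` in `ℝ[x,y]`, and the normal-derivative trace
`t ↦ (∂_x B + ∂_y B)(t, 1−t)` agrees with a polynomial of degree at most 2, then this
trace vanishes identically. -/
theorem no_polynomial_normal_bubble (B : MvPolynomial (Fin 2) ℝ)
    (hx : (X 0 : MvPolynomial (Fin 2) ℝ) ^ 2 ∣ B)
    (hy : (X 1 : MvPolynomial (Fin 2) ℝ) ^ 2 ∣ B)
    (hl : (1 - X 0 - X 1 : MvPolynomial (Fin 2) ℝ) ∣ B)
    (hdeg : ∃ P : Polynomial ℝ, P.degree ≤ 2 ∧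
      ∀ t : ℝ, eval ![t, 1 - t] (pderiv 0 B + pderiv 1 B) = P.eval t) :
    ∀ t : ℝ, eval ![t, 1 - t] (pderiv 0 B + pderiv 1 B) = 0 := by
  obtain ⟨E, hE⟩ := hx
  obtain ⟨F, hF⟩ := hy
  obtain ⟨D, hD⟩ := hl
  obtain ⟨P, hPdeg, hP⟩ := hdeg
  set φ := (aeval (R := ℝ) ![Polynomial.X, 1 - Polynomial.X] :
      MvPolynomial (Fin 2) ℝ →ₐ[ℝ] Polynomial ℝ) with hφdef
  have hφB : φ B = 0 := by
    rw [hD, map_mul]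
    have h0 : φ (1 - X 0 - X 1) = 0 := by simp [hφdef]
    rw [h0, zero_mul]
  have hXne : (Polynomial.X : Polynomial ℝ) ≠ 0 := Polynomial.X_ne_zero
  have h1Xne : (1 - Polynomial.X : Polynomial ℝ) ≠ 0 := by
    intro h
    have := congrArg (Polynomial.eval 0) h
    simp at this
  have hφE : φ E = 0 := by
    have h : (Polynomial.X : Polynomial ℝ) ^ 2 * φ E = 0 := by
      rw [← hφB, hE]; simp [hφdef]
    rcases mul_eq_zero.mp h with h' | h'
    · exact absurd (pow_eq_zero_iff (n := 2) (by norm_num) |>.mp h') hXne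
    · exact h'
  have hφF : φ F = 0 := by
    have h : (1 - Polynomial.X : Polynomial ℝ) ^ 2 * φ F = 0 := by
      rw [← hφB, hF]; simp [hφdef]
    rcases mul_eq_zero.mp h with h' | h'
    · exact absurd (pow_eq_zero_iff (n := 2) (by norm_num) |>.mp h') h1Xne
    · exact h'
  have hPQ : φ (pderiv 0 B + pderiv 1 B) = P := by
    apply Polynomial.funext
    intro t
    rw [← eval_line_aux, hP t]
  -- X^2 divides P
  have hderivE : pderiv 0 ((X 0 : MvPolynomial (Fin 2) ℝ) ^ 2 * E)
      + pderiv 1 ((X 0 : MvPolynomial (Fin 2) ℝ) ^ 2 * E)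
      = (2 * X 0) * E + (X 0) ^ 2 * (pderiv 0 E + pderiv 1 E) := by
    simp [pderiv_mul, pderiv_X, Pi.single_apply]
    ring
  have hdvdX : (Polynomial.X : Polynomial ℝ) ^ 2 ∣ P := by
    refine ⟨φ (pderiv 0 E + pderiv 1 E), ?_⟩
    rw [← hPQ, hE, hderivE]
    simp [hφdef, show (aeval ![Polynomial.X, 1 - Polynomial.X] : MvPolynomial (Fin 2) ℝ →ₐ[ℝ] Polynomial ℝ) E = 0 from hφE]
  have hderivF : pderiv 0 ((X 1 : MvPolynomial (Fin 2) ℝ) ^ 2 * F)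
      + pderiv 1 ((X 1 : MvPolynomial (Fin 2) ℝ) ^ 2 * F)
      = (2 * X 1) * F + (X 1) ^ 2 * (pderiv 0 F + pderiv 1 F) := by
    simp [pderiv_mul, pderiv_X, Pi.single_apply]
    ring
  have hdvd1X : (1 - Polynomial.X : Polynomial ℝ) ^ 2 ∣ P := by
    refine ⟨φ (pderiv 0 F + pderiv 1 F), ?_⟩
    rw [← hPQ, hF, hderivF]
    simp [hφdef, show (aeval ![Polynomial.X, 1 - Polynomial.X] : MvPolynomial (Fin 2) ℝ →ₐ[ℝ] Polynomial ℝ) F = 0 from hφF]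
  have hcop : IsCoprime (Polynomial.X : Polynomial ℝ) (1 - Polynomial.X) :=
    ⟨1, 1, by ring⟩
  have hdvd : (Polynomial.X : Polynomial ℝ) ^ 2 * (1 - Polynomial.X) ^ 2 ∣ P :=
    (hcop.pow).mul_dvd hdvdX hdvd1X
  have hP0 : P = 0 := by
    by_contra hne
    have hdeg4 : ((Polynomial.X : Polynomial ℝ) ^ 2 * (1 - Polynomial.X) ^ 2).degree = 4 := by
      rw [Polynomial.degree_mul, Polynomial.degree_pow, Polynomial.degree_pow,
        Polynomial.degree_X]
      have : (1 - Polynomial.X : Polynomial ℝ).degree = 1 := by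
        have : (1 - Polynomial.X : Polynomial ℝ) = -(Polynomial.X - Polynomial.C 1) := by
          simp
        rw [this, Polynomial.degree_neg, Polynomial.degree_X_sub_C]
      rw [this]
      rfl
    have := Polynomial.degree_le_of_dvd hdvd hne
    rw [hdeg4] at this
    have := le_trans this hPdeg
    norm_num at this
  intro t
  rw [hP t, hP0, Polynomial.eval_zero]
end
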